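/- Let w be any one of the four Chebyshev weights and 0<m<n integers. Then for every algebraic polynomial P of degree at most n−m: V_n^m P(x) = P(x) for all x∈[−1,1], i.e. the VP operator reproduces all polynomials of degree at most n−m. -/

import Mathlib

open Real Set Finset Polynomial

noncomputable section

/-- The four kinds of Chebyshev weights. -/
inductive ChebKind | one | two | three | four

/-- The Chebyshev weight function of each kind. -/
noncomputable def wFn : ChebKind → ℝ → ℝ
  | .one,   x => 1 / Real.sqrt (1 - x ^ 2)
  | .two,   x => Real.sqrt (1 - x ^ 2)
  | .three, x => Real.sqrt ((1 + x) / (1 - x))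
  | .four,  x => Real.sqrt ((1 - x) / (1 + x))

/-- The orthonormal polynomials associated with each Chebyshev weight
(`p_j(w,·)`), expressed via Mathlib's Chebyshev polynomials of the first and
second kind.  On `[-1,1]` these coincide with the usual trigonometric forms. -/
noncomputable def pPoly : ChebKind → ℕ → Polynomial ℝ
  | .one, 0       => Polynomial.C (1 / Real.sqrt π)
  | .one, (j + 1) => Polynomial.C (Real.sqrt (2 / π)) * Polynomial.Chebyshev.T ℝ ((j : ℤ) + 1)
  | .two, j       => Polynomial.C (Real.sqrt (2 / π)) * Polynomial.Chebyshev.U ℝ (j : ℤ)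
  | .three, j     => Polynomial.C (1 / Real.sqrt π) *
      (Polynomial.Chebyshev.U ℝ (j : ℤ) - Polynomial.Chebyshev.U ℝ ((j : ℤ) - 1))
  | .four, j      => Polynomial.C (1 / Real.sqrt π) *
      (Polynomial.Chebyshev.U ℝ (j : ℤ) + Polynomial.Chebyshev.U ℝ ((j : ℤ) - 1))

noncomputable def pEval (w : ChebKind) (j : ℕ) (x : ℝ) : ℝ := (pPoly w j).eval x

/-- Angular Chebyshev nodes `t_k^n`. -/
noncomputable def tNode : ChebKind → ℕ → ℕ → ℝ
  | .one,   n, k => (2 * (k : ℝ) - 1) * π / (2 * n)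
  | .two,   n, k => (k : ℝ) * π / (n + 1)
  | .three, n, k => (2 * (k : ℝ) - 1) * π / (2 * n + 1)
  | .four,  n, k => 2 * (k : ℝ) * π / (2 * n + 1)

/-- Chebyshev nodes `x_k^n = cos t_k^n`, zeros of `p_n(w,·)`. -/
noncomputable def xNode (w : ChebKind) (n k : ℕ) : ℝ := Real.cos (tNode w n k)

/-- Christoffel numbers `λ_k^n`. -/
noncomputable def lam : ChebKind → ℕ → ℕ → ℝ
  | .one,   n, _ => π / n
  | .two,   n, k => π / (n + 1) * Real.sin (tNode .two n k) ^ 2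
  | .three, n, k => 4 * π / (2 * n + 1) * Real.cos (tNode .three n k / 2) ^ 2
  | .four,  n, k => 4 * π / (2 * n + 1) * Real.sin (tNode .four n k / 2) ^ 2

/-- de la Vallée Poussin filter coefficients `μ_{n,j}^m`. -/
noncomputable def mufilt (n m j : ℕ) : ℝ :=
  if j ≤ n - m then 1 else ((n : ℝ) + m - j) / (2 * m)

/-- Fundamental VP polynomials `Φ_{n,k}^m(w;x)`. -/
noncomputable def Phi (w : ChebKind) (n m k : ℕ) (x : ℝ) : ℝ :=
  lam w n k * ∑ j ∈ Finset.range (n + m), mufilt n m j * pEval w j (xNode w n k) * pEval w j x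

/-- The VP interpolation polynomial `V_n^m f`. -/
noncomputable def VP (w : ChebKind) (n m : ℕ) (f : ℝ → ℝ) (x : ℝ) : ℝ :=
  ∑ k ∈ Finset.Icc 1 n, f (xNode w n k) * Phi w n m k x

/-- Jacobi weight `u(x) = (1-x)^γ (1+x)^δ`. -/
noncomputable def jac (γ δ : ℝ) (x : ℝ) : ℝ := (1 - x) ^ γ * (1 + x) ^ δ

/-- Weighted uniform norm `‖f·u‖ = max_{|x|≤1} |f(x) u(x)|`. -/
noncomputable def wnorm (γ δ : ℝ) (f : ℝ → ℝ) : ℝ :=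
  sSup ((fun x => |f x * jac γ δ x|) '' Set.Icc (-1 : ℝ) 1)

/-- Error of best weighted polynomial approximation `E_n(f)_u`. -/
noncomputable def bestE (γ δ : ℝ) (n : ℕ) (f : ℝ → ℝ) : ℝ :=
  sInf ((fun P : Polynomial ℝ => wnorm γ δ (fun x => f x - P.eval x)) ''
    {P : Polynomial ℝ | P.natDegree ≤ n})

/-- Membership in the space `C^0_u`: `f` is continuous on compact subsets of
`(-1,1)`, `f·u` extends continuously to `[-1,1]`, with value (= limit) `0` at
`±1` when the corresponding exponent is positive. -/
def MemC0 (γ δ : ℝ) (f : ℝ → ℝ) : Prop :=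
  ContinuousOn f (Set.Ioo (-1 : ℝ) 1) ∧
  ContinuousOn (fun x => f x * jac γ δ x) (Set.Icc (-1 : ℝ) 1) ∧
  (0 < γ → f 1 * jac γ δ 1 = 0) ∧ (0 < δ → f (-1) * jac γ δ (-1) = 0)

/-- Conditions (hp-u) on the exponents of `u=(1-x)^γ(1+x)^δ` relative to `w`. -/
def hpu : ChebKind → ℝ → ℝ → Prop
  | .one,   γ, δ => 0 ≤ γ ∧ γ ≤ 1 ∧ 0 ≤ δ ∧ δ ≤ 1
  | .two,   γ, δ => 0 < γ ∧ γ ≤ 3 / 2 ∧ 0 < δ ∧ δ ≤ 3 / 2 ∧ -1 ≤ γ - δ ∧ γ - δ ≤ 1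
  | .three, γ, δ => 0 ≤ γ ∧ γ ≤ 1 ∧ 0 < δ ∧ δ ≤ 3 / 2 ∧ γ - δ ≤ 1 / 2
  | .four,  γ, δ => 0 < γ ∧ γ ≤ 3 / 2 ∧ 0 ≤ δ ∧ δ ≤ 1 ∧ -(1 / 2) ≤ γ - δ

/-- `φ(x) = sqrt(1-x²)`. -/
noncomputable def phi (x : ℝ) : ℝ := Real.sqrt (1 - x ^ 2)

/-- The set of values `|f^{(r)}(x)| φ(x)^r u(x)`, `x ∈ (-1,1)`. -/
noncomputable def derSet (γ δ : ℝ) (r : ℕ) (f : ℝ → ℝ) : Set ℝ :=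
  (fun x : ℝ => |iteratedDerivWithin r f (Set.Ioo (-1 : ℝ) 1) x| * phi x ^ r * jac γ δ x) ''
    Set.Ioo (-1 : ℝ) 1

/-- Membership in the Sobolev-type space `W_r(u)`. -/
def MemW (γ δ : ℝ) (r : ℕ) (f : ℝ → ℝ) : Prop :=
  MemC0 γ δ f ∧ ContDiffOn ℝ r f (Set.Ioo (-1 : ℝ) 1) ∧ BddAbove (derSet γ δ r f)

/-- The norm of `W_r(u)`: `‖fu‖ + ‖f^{(r)} φ^r u‖`. -/
noncomputable def Wnorm (γ δ : ℝ) (r : ℕ) (f : ℝ → ℝ) : ℝ :=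
  wnorm γ δ f + sSup (derSet γ δ r f)

/-- The set of values `(n+1)^r E_n(f)_u`, `n ≥ 1`. -/
noncomputable def zSet (γ δ r : ℝ) (f : ℝ → ℝ) : Set ℝ :=
  (fun n : ℕ => ((n : ℝ) + 1) ^ r * bestE γ δ n f) '' {n : ℕ | 1 ≤ n}

/-- Membership in the Hölder–Zygmund space `Z_r(u)`. -/
def MemZ (γ δ r : ℝ) (f : ℝ → ℝ) : Prop := MemC0 γ δ f ∧ BddAbove (zSet γ δ r f)

/-- The norm of `Z_r(u)`: `‖fu‖ + sup_{n≥1} (n+1)^r E_n(f)_u`. -/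
noncomputable def Znorm (γ δ r : ℝ) (f : ℝ → ℝ) : ℝ :=
  wnorm γ δ f + sSup (zSet γ δ r f)

/-- Exponents `(γ,δ)` of the weight `u = sqrt(w·φ)`. -/
def uExp : ChebKind → ℝ × ℝ
  | .one => (0, 0) | .two => (1 / 2, 1 / 2) | .three => (0, 1 / 2) | .four => (1 / 2, 0)

/-- The constant `C_w`. -/
def Cw : ChebKind → ℝ | .one => 2 | _ => 1

/-- The quantity `n_w`. -/
noncomputable def nw : ChebKind → ℕ → ℝ
  | .one, n => n | .two, n => n + 1
  | .three, n => (2 * (n : ℝ) + 1) / 2 | .four, n => (2 * (n : ℝ) + 1) / 2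

/-- The quantity `m_w`. -/
noncomputable def mw : ChebKind → ℕ → ℕ → ℝ
  | .one, n, m => (n : ℝ) + m | .two, n, m => (n : ℝ) + m
  | .three, n, m => 2 * ((n : ℝ) + m) - 1 | .four, n, m => 2 * ((n : ℝ) + m) - 1

/-- The polynomials `q_{n,j}^m(w,·)` (orthogonal VP basis). -/
noncomputable def qq (w : ChebKind) (n m j : ℕ) (x : ℝ) : ℝ :=
  if j ≤ n - m then pEval w j x
  else ((m : ℝ) + n - j) / (2 * m) * pEval w j x
    - ((m : ℝ) + j - n) / (2 * m) * pEval w (2 * n - j) x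

end

section Aux
open Polynomial.Chebyshev

lemma sin_add_sin' (x y : ℝ) : Real.sin x + Real.sin y
    = 2 * Real.sin ((x + y) / 2) * Real.cos ((x - y) / 2) := by
  have := Real.sin_sub_sin x (-y)
  simpa [sub_neg_eq_add, ← sub_eq_add_neg] using this

lemma tele1 (θ : ℝ) (n : ℕ) :
    2 * Real.sin θ * ∑ k ∈ Finset.Icc 1 n, Real.cos ((2 * (k : ℝ) - 1) * θ)
      = Real.sin (2 * n * θ) := by
  induction n with
  | zero => simp
  | succ n ih =>
    rw [Finset.sum_Icc_succ_top (by omega : 1 ≤ n + 1)]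
    have h := Real.sin_sub_sin ((2 * (n : ℝ) + 2) * θ) ((2 * (n : ℝ)) * θ)
    have e1 : ((2 * (n : ℝ) + 2) * θ - (2 * (n : ℝ)) * θ) / 2 = θ := by ring
    have e2 : ((2 * (n : ℝ) + 2) * θ + (2 * (n : ℝ)) * θ) / 2 = (2 * ((n : ℝ) + 1) - 1) * θ := by
      ring
    rw [e1, e2] at h
    push_cast
    push_cast at ih
    rw [mul_add, show 2 * ((n : ℝ) + 1) * θ = (2 * (n : ℝ) + 2) * θ from by ring]
    linarith [ih, h]

lemma tele2 (θ : ℝ) (n : ℕ) :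
    2 * Real.sin θ * ∑ k ∈ Finset.Icc 1 n, Real.cos (2 * (k : ℝ) * θ)
      = Real.sin ((2 * n + 1) * θ) - Real.sin θ := by
  induction n with
  | zero => simp
  | succ n ih =>
    rw [Finset.sum_Icc_succ_top (by omega : 1 ≤ n + 1)]
    have h := Real.sin_sub_sin ((2 * (n : ℝ) + 3) * θ) ((2 * (n : ℝ) + 1) * θ)
    have e1 : ((2 * (n : ℝ) + 3) * θ - (2 * (n : ℝ) + 1) * θ) / 2 = θ := by ring
    have e2 : ((2 * (n : ℝ) + 3) * θ + (2 * (n : ℝ) + 1) * θ) / 2 = 2 * ((n : ℝ) + 1) * θ := by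
      ring
    rw [e1, e2] at h
    push_cast
    push_cast at ih
    rw [mul_add, show (2 * ((n : ℝ) + 1) + 1) * θ = (2 * (n : ℝ) + 3) * θ from by ring]
    linarith [ih, h]

end Aux
section Sums

lemma cancel_sin {s S c : ℝ} (hs : s ≠ 0) (h : 2 * s * S = c * s) : S = c / 2 := by
  have h2 : s * (2 * S - c) = 0 := by linear_combination h
  rcases mul_eq_zero.mp h2 with h3 | h3
  · exact absurd h3 hs
  · linarith

lemma sum_cos_zero (w : ChebKind) (n : ℕ) :
    ∑ k ∈ Finset.Icc 1 n, Real.cos ((0 : ℕ) * tNode w n k) = n := by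
  simp

lemma sum1 (n a : ℕ) (hn : 0 < n) (ha : 0 < a) (h2 : a < 2 * n) :
    ∑ k ∈ Finset.Icc 1 n, Real.cos (a * tNode ChebKind.one n k) = 0 := by
  set θ : ℝ := a * π / (2 * n) with hθ
  have hn' : (0:ℝ) < n := by exact_mod_cast hn
  have hθpos : 0 < θ := by
    apply div_pos (mul_pos (by exact_mod_cast ha) Real.pi_pos) (by positivity)
  have hθlt : θ < π := by
    rw [hθ, div_lt_iff₀ (by positivity)]
    have : (a:ℝ) < 2 * n := by exact_mod_cast h2
    nlinarith [Real.pi_pos]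
  have hs : Real.sin θ ≠ 0 := ne_of_gt (Real.sin_pos_of_pos_of_lt_pi hθpos hθlt)
  have key := tele1 θ n
  have harg : ∀ k ∈ Finset.Icc 1 n,
      Real.cos (a * tNode ChebKind.one n k) = Real.cos ((2 * (k:ℝ) - 1) * θ) := by
    intro k _
    congr 1
    simp only [tNode, hθ]
    field_simp
  rw [Finset.sum_congr rfl harg]
  have h2n : 2 * (n:ℝ) * θ = a * π := by
    rw [hθ]; field_simp
  rw [h2n] at key
  have : Real.sin ((a:ℝ) * π) = 0 := Real.sin_nat_mul_pi a
  rw [this] at key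
  have := mul_eq_zero.mp key
  rcases this with h | h
  · exact absurd h (by simpa using hs)
  · exact h

lemma sum2 (n a : ℕ) (ha : 0 < a) (h2 : a < 2 * n + 2) :
    ∑ k ∈ Finset.Icc 1 n, Real.cos (a * tNode ChebKind.two n k)
      = -(1 + Real.cos (a * π)) / 2 := by
  set θ : ℝ := a * π / (2 * n + 2) with hθ
  have hθpos : 0 < θ := by
    apply div_pos (mul_pos (by exact_mod_cast ha) Real.pi_pos) (by positivity)
  have hθlt : θ < π := by
    rw [hθ, div_lt_iff₀ (by positivity)]
    have : (a:ℝ) < 2 * n + 2 := by exact_mod_cast h2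
    nlinarith [Real.pi_pos]
  have hs : Real.sin θ ≠ 0 := ne_of_gt (Real.sin_pos_of_pos_of_lt_pi hθpos hθlt)
  have key := tele2 θ n
  have harg : ∀ k ∈ Finset.Icc 1 n,
      Real.cos (a * tNode ChebKind.two n k) = Real.cos (2 * (k:ℝ) * θ) := by
    intro k _
    congr 1
    simp only [tNode, hθ]
    field_simp
  rw [Finset.sum_congr rfl harg]
  have h2n : (2 * (n:ℝ) + 1) * θ = a * π - θ := by
    rw [hθ]; field_simp; ring
  rw [h2n, Real.sin_sub, Real.sin_nat_mul_pi a] at key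
  have key2 : 2 * Real.sin θ * (∑ k ∈ Finset.Icc 1 n, Real.cos (2 * (k:ℝ) * θ))
      = (-(1 + Real.cos (a * π))) * Real.sin θ := by linear_combination key
  rw [cancel_sin hs key2]

lemma sum3 (n a : ℕ) (ha : 0 < a) (h2 : a ≤ 2 * n) :
    ∑ k ∈ Finset.Icc 1 n, Real.cos (a * tNode ChebKind.three n k)
      = -Real.cos (a * π) / 2 := by
  set θ : ℝ := a * π / (2 * n + 1) with hθ
  have hθpos : 0 < θ := by
    apply div_pos (mul_pos (by exact_mod_cast ha) Real.pi_pos) (by positivity)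
  have hθlt : θ < π := by
    rw [hθ, div_lt_iff₀ (by positivity)]
    have : (a:ℝ) ≤ 2 * n := by exact_mod_cast h2
    nlinarith [Real.pi_pos]
  have hs : Real.sin θ ≠ 0 := ne_of_gt (Real.sin_pos_of_pos_of_lt_pi hθpos hθlt)
  have key := tele1 θ n
  have harg : ∀ k ∈ Finset.Icc 1 n,
      Real.cos (a * tNode ChebKind.three n k) = Real.cos ((2 * (k:ℝ) - 1) * θ) := by
    intro k _
    congr 1
    simp only [tNode, hθ]
    field_simp
  rw [Finset.sum_congr rfl harg]
  have h2n : 2 * (n:ℝ) * θ = a * π - θ := by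
    rw [hθ]; field_simp; ring
  rw [h2n, Real.sin_sub, Real.sin_nat_mul_pi a] at key
  have key2 : 2 * Real.sin θ * (∑ k ∈ Finset.Icc 1 n, Real.cos ((2 * (k:ℝ) - 1) * θ))
      = (-Real.cos (a * π)) * Real.sin θ := by linear_combination key
  rw [cancel_sin hs key2]

lemma sum4 (n a : ℕ) (ha : 0 < a) (h2 : a ≤ 2 * n) :
    ∑ k ∈ Finset.Icc 1 n, Real.cos (a * tNode ChebKind.four n k) = -(1 / 2) := by
  set θ : ℝ := a * π / (2 * n + 1) with hθ
  have hθpos : 0 < θ := by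
    apply div_pos (mul_pos (by exact_mod_cast ha) Real.pi_pos) (by positivity)
  have hθlt : θ < π := by
    rw [hθ, div_lt_iff₀ (by positivity)]
    have : (a:ℝ) ≤ 2 * n := by exact_mod_cast h2
    nlinarith [Real.pi_pos]
  have hs : Real.sin θ ≠ 0 := ne_of_gt (Real.sin_pos_of_pos_of_lt_pi hθpos hθlt)
  have key := tele2 θ n
  have harg : ∀ k ∈ Finset.Icc 1 n,
      Real.cos (a * tNode ChebKind.four n k) = Real.cos (2 * (k:ℝ) * θ) := by
    intro k _
    congr 1
    simp only [tNode, hθ]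
    field_simp
  rw [Finset.sum_congr rfl harg]
  have h2n : (2 * (n:ℝ) + 1) * θ = a * π := by
    rw [hθ]; field_simp
  rw [h2n, Real.sin_nat_mul_pi a] at key
  have key2 : 2 * Real.sin θ * (∑ k ∈ Finset.Icc 1 n, Real.cos (2 * (k:ℝ) * θ))
      = (-1) * Real.sin θ := by linear_combination key
  rw [cancel_sin hs key2]
  norm_num

end Sums
section PE
open Polynomial.Chebyshev

lemma pe1_zero (x : ℝ) : pEval ChebKind.one 0 x = 1 / Real.sqrt π := by
  simp [pEval, pPoly]

lemma pe1_succ (j : ℕ) (t : ℝ) :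
    pEval ChebKind.one (j + 1) (Real.cos t)
      = Real.sqrt (2 / π) * Real.cos (((j:ℝ) + 1) * t) := by
  simp only [pEval, pPoly, Polynomial.eval_mul, Polynomial.eval_C]
  rw [T_real_cos]
  push_cast
  ring_nf

lemma pe2 (j : ℕ) (t : ℝ) (h : Real.sin t ≠ 0) :
    pEval ChebKind.two j (Real.cos t)
      = Real.sqrt (2 / π) * (Real.sin (((j:ℝ) + 1) * t) / Real.sin t) := by
  simp only [pEval, pPoly, Polynomial.eval_mul, Polynomial.eval_C]
  have hU := U_real_cos t (j : ℤ)
  push_cast at hU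
  congr 1
  rw [eq_div_iff h]
  exact hU

lemma pe3 (j : ℕ) (t : ℝ) (hc : Real.cos (t / 2) ≠ 0) (hs : Real.sin (t / 2) ≠ 0) :
    pEval ChebKind.three j (Real.cos t)
      = 1 / Real.sqrt π * (Real.cos ((2 * (j:ℝ) + 1) * t / 2) / Real.cos (t / 2)) := by
  simp only [pEval, pPoly, Polynomial.eval_mul, Polynomial.eval_C, Polynomial.eval_sub]
  have hU1 := U_real_cos t (j : ℤ)
  have hU2 := U_real_cos t ((j : ℤ) - 1)
  push_cast at hU1 hU2
  have hst : Real.sin t = 2 * Real.sin (t / 2) * Real.cos (t / 2) := by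
    rw [show t = 2 * (t / 2) from by ring, Real.sin_two_mul]
    ring_nf
  have hd : Real.sin (((j:ℝ) + 1) * t) - Real.sin ((j:ℝ) * t)
      = 2 * Real.sin (t / 2) * Real.cos ((2 * (j:ℝ) + 1) * t / 2) := by
    have := Real.sin_sub_sin (((j:ℝ) + 1) * t) ((j:ℝ) * t)
    rw [show (((j:ℝ) + 1) * t - (j:ℝ) * t) / 2 = t / 2 from by ring,
      show (((j:ℝ) + 1) * t + (j:ℝ) * t) / 2 = (2 * (j:ℝ) + 1) * t / 2 from by ring] at this
    exact this
  have hsub : (Polynomial.eval (Real.cos t) (U ℝ (j:ℤ))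
      - Polynomial.eval (Real.cos t) (U ℝ ((j:ℤ) - 1))) * Real.sin t
      = 2 * Real.sin (t / 2) * Real.cos ((2 * (j:ℝ) + 1) * t / 2) := by
    rw [sub_mul, hU1]
    rw [show ((j:ℝ) - 1 + 1) = (j:ℝ) from by ring] at hU2
    rw [hU2, hd]
  rw [hst] at hsub
  congr 1
  rw [eq_div_iff hc]
  have h2 : (2 * Real.sin (t / 2)) * ((Polynomial.eval (Real.cos t) (U ℝ (j:ℤ))
      - Polynomial.eval (Real.cos t) (U ℝ ((j:ℤ) - 1))) * Real.cos (t / 2)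
      - Real.cos ((2 * (j:ℝ) + 1) * t / 2)) = 0 := by linear_combination hsub
  rcases mul_eq_zero.mp h2 with h3 | h3
  · exact absurd (by linarith : Real.sin (t / 2) = 0) hs
  · linarith
lemma pe4 (j : ℕ) (t : ℝ) (hc : Real.cos (t / 2) ≠ 0) (hs : Real.sin (t / 2) ≠ 0) :
    pEval ChebKind.four j (Real.cos t)
      = 1 / Real.sqrt π * (Real.sin ((2 * (j:ℝ) + 1) * t / 2) / Real.sin (t / 2)) := by
  simp only [pEval, pPoly, Polynomial.eval_mul, Polynomial.eval_C, Polynomial.eval_add]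
  have hU1 := U_real_cos t (j : ℤ)
  have hU2 := U_real_cos t ((j : ℤ) - 1)
  push_cast at hU1 hU2
  have hst : Real.sin t = 2 * Real.sin (t / 2) * Real.cos (t / 2) := by
    rw [show t = 2 * (t / 2) from by ring, Real.sin_two_mul]
    ring_nf
  have hd : Real.sin (((j:ℝ) + 1) * t) + Real.sin ((j:ℝ) * t)
      = 2 * Real.sin ((2 * (j:ℝ) + 1) * t / 2) * Real.cos (t / 2) := by
    have := sin_add_sin' (((j:ℝ) + 1) * t) ((j:ℝ) * t)
    rw [show ((((j:ℝ) + 1) * t + (j:ℝ) * t)) / 2 = (2 * (j:ℝ) + 1) * t / 2 from by ring,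
      show ((((j:ℝ) + 1) * t - (j:ℝ) * t)) / 2 = t / 2 from by ring] at this
    exact this
  have hsub : (Polynomial.eval (Real.cos t) (U ℝ (j:ℤ))
      + Polynomial.eval (Real.cos t) (U ℝ ((j:ℤ) - 1))) * Real.sin t
      = 2 * Real.sin ((2 * (j:ℝ) + 1) * t / 2) * Real.cos (t / 2) := by
    rw [add_mul, hU1]
    rw [show ((j:ℝ) - 1 + 1) = (j:ℝ) from by ring] at hU2
    rw [hU2, hd]
  rw [hst] at hsub
  congr 1
  rw [eq_div_iff hs]
  have h2 : (2 * Real.cos (t / 2)) * ((Polynomial.eval (Real.cos t) (U ℝ (j:ℤ))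
      + Polynomial.eval (Real.cos t) (U ℝ ((j:ℤ) - 1))) * Real.sin (t / 2)
      - Real.sin ((2 * (j:ℝ) + 1) * t / 2)) = 0 := by linear_combination hsub
  rcases mul_eq_zero.mp h2 with h3 | h3
  · exact absurd (by linarith : Real.cos (t / 2) = 0) hc
  · linarith

lemma tnode_mem (w : ChebKind) (n k : ℕ) (hk : k ∈ Finset.Icc 1 n) :
    0 < tNode w n k ∧ tNode w n k < π := by
  simp only [Finset.mem_Icc] at hk
  obtain ⟨hk1, hk2⟩ := hk
  have hn : 0 < n := lt_of_lt_of_le hk1 hk2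
  have hk1' : (1:ℝ) ≤ k := by exact_mod_cast hk1
  have hk2' : (k:ℝ) ≤ n := by exact_mod_cast hk2
  have hn' : (0:ℝ) < n := by exact_mod_cast hn
  have hπ := Real.pi_pos
  cases w with
  | one => constructor
           · simp only [tNode]
             apply div_pos (mul_pos (by nlinarith) hπ) (by positivity)
           · simp only [tNode]
             rw [div_lt_iff₀ (by positivity)]
             nlinarith
  | two => constructor
           · simp only [tNode]; positivity
           · simp only [tNode]
             rw [div_lt_iff₀ (by positivity)]
             nlinarith
  | three => constructor
             · simp only [tNode]
               apply div_pos (mul_pos (by nlinarith) hπ) (by positivity)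
             · simp only [tNode]
               rw [div_lt_iff₀ (by positivity)]
               nlinarith
  | four => constructor
            · simp only [tNode]; positivity
            · simp only [tNode]
              rw [div_lt_iff₀ (by positivity)]
              nlinarith
end PE
section Ortho

lemma pe1_pos (j : ℕ) (hj : 0 < j) (t : ℝ) :
    pEval ChebKind.one j (Real.cos t) = Real.sqrt (2 / π) * Real.cos ((j:ℝ) * t) := by
  cases j with
  | zero => omega
  | succ j' => have := pe1_succ j' t; push_cast at this ⊢; exact this

lemma ortho1 (n i j : ℕ) (hn : 0 < n) (hij : i + j < 2 * n) (hle : i ≤ j) :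
    ∑ k ∈ Finset.Icc 1 n, lam ChebKind.one n k * pEval ChebKind.one i (xNode ChebKind.one n k)
      * pEval ChebKind.one j (xNode ChebKind.one n k) = if i = j then 1 else 0 := by
  have hπ := Real.pi_pos
  have hn' : (0:ℝ) < n := by exact_mod_cast hn
  have hps : Real.sqrt (2 / π) * Real.sqrt (2 / π) = 2 / π :=
    Real.mul_self_sqrt (by positivity)
  rcases Nat.eq_zero_or_pos i with hi | hi
  · subst hi
    rcases Nat.eq_zero_or_pos j with hj | hj
    · subst hj
      rw [if_pos rfl]
      have trans : ∀ k ∈ Finset.Icc 1 n,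
          lam ChebKind.one n k * pEval ChebKind.one 0 (xNode ChebKind.one n k)
            * pEval ChebKind.one 0 (xNode ChebKind.one n k) = 1 / n := by
        intro k _
        simp only [lam, xNode, pe1_zero]
        have hsp : Real.sqrt π * Real.sqrt π = π := Real.mul_self_sqrt hπ.le
        rw [mul_assoc, show (1 / Real.sqrt π) * (1 / Real.sqrt π)
            = 1 / (Real.sqrt π * Real.sqrt π) from by ring, hsp]
        field_simp
      rw [Finset.sum_congr rfl trans, Finset.sum_const, Nat.card_Icc]
      simp only [Nat.add_sub_cancel, nsmul_eq_mul]
      field_simp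
    · rw [if_neg (by omega)]
      have trans : ∀ k ∈ Finset.Icc 1 n,
          lam ChebKind.one n k * pEval ChebKind.one 0 (xNode ChebKind.one n k)
            * pEval ChebKind.one j (xNode ChebKind.one n k)
          = (π / n * (1 / Real.sqrt π) * Real.sqrt (2 / π)) * Real.cos (j * tNode ChebKind.one n k) := by
        intro k _
        simp only [lam, xNode, pe1_zero, pe1_pos j hj]
        ring
      rw [Finset.sum_congr rfl trans, ← Finset.mul_sum,
        sum1 n j hn hj (by omega), mul_zero]
  · have hj : 0 < j := lt_of_lt_of_le hi hle
    have trans : ∀ k ∈ Finset.Icc 1 n,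
        lam ChebKind.one n k * pEval ChebKind.one i (xNode ChebKind.one n k)
          * pEval ChebKind.one j (xNode ChebKind.one n k)
        = (1 / n) * (Real.cos ((i + j : ℕ) * tNode ChebKind.one n k)
            + Real.cos ((j - i : ℕ) * tNode ChebKind.one n k)) := by
      intro k _
      simp only [lam, xNode, pe1_pos i hi, pe1_pos j hj]
      set t := tNode ChebKind.one n k
      have hca := Real.cos_add_cos ((i + j : ℕ) * t) ((j - i : ℕ) * t)
      rw [show (((i + j : ℕ) : ℝ) * t + ((j - i : ℕ) : ℝ) * t) / 2 = (j:ℝ) * t by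
          push_cast [Nat.cast_sub hle]; ring,
        show (((i + j : ℕ) : ℝ) * t - ((j - i : ℕ) : ℝ) * t) / 2 = (i:ℝ) * t by
          push_cast [Nat.cast_sub hle]; ring] at hca
      rw [hca, show π / (n:ℝ) * (Real.sqrt (2/π) * Real.cos ((i:ℝ) * t))
            * (Real.sqrt (2/π) * Real.cos ((j:ℝ) * t))
          = π / (n:ℝ) * (Real.sqrt (2/π) * Real.sqrt (2/π))
            * (Real.cos ((i:ℝ) * t) * Real.cos ((j:ℝ) * t)) from by ring, hps]
      field_simp
    rw [Finset.sum_congr rfl trans, ← Finset.mul_sum, Finset.sum_add_distrib,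
      sum1 n (i + j) hn (by omega) (by omega)]
    by_cases heq : i = j
    · subst heq
      rw [if_pos rfl, Nat.sub_self, sum_cos_zero]
      field_simp
      ring
    · rw [if_neg heq, sum1 n (j - i) hn (by omega) (by omega)]
      ring

end Ortho
section Ortho2

lemma ortho2 (n i j : ℕ) (hij : i + j < 2 * n) (hle : i ≤ j) :
    ∑ k ∈ Finset.Icc 1 n, lam ChebKind.two n k * pEval ChebKind.two i (xNode ChebKind.two n k)
      * pEval ChebKind.two j (xNode ChebKind.two n k) = if i = j then 1 else 0 := by
  have hπ := Real.pi_pos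
  have hn : 0 < n := by omega
  have hn' : (0:ℝ) < n := by exact_mod_cast hn
  have hps : Real.sqrt (2 / π) * Real.sqrt (2 / π) = 2 / π :=
    Real.mul_self_sqrt (by positivity)
  have trans : ∀ k ∈ Finset.Icc 1 n,
      lam ChebKind.two n k * pEval ChebKind.two i (xNode ChebKind.two n k)
        * pEval ChebKind.two j (xNode ChebKind.two n k)
      = (1 / ((n:ℝ) + 1)) * (Real.cos ((j - i : ℕ) * tNode ChebKind.two n k)
          - Real.cos ((i + j + 2 : ℕ) * tNode ChebKind.two n k)) := by
    intro k hk
    obtain ⟨ht0, htπ⟩ := tnode_mem ChebKind.two n k hk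
    set t := tNode ChebKind.two n k with hts
    have hs : Real.sin t ≠ 0 := ne_of_gt (Real.sin_pos_of_pos_of_lt_pi ht0 htπ)
    simp only [lam, xNode, ← hts, pe2 i t hs, pe2 j t hs]
    have hcc := Real.cos_sub_cos ((j - i : ℕ) * t) ((i + j + 2 : ℕ) * t)
    rw [show (((j - i : ℕ) : ℝ) * t + ((i + j + 2 : ℕ) : ℝ) * t) / 2 = ((j:ℝ) + 1) * t by
        push_cast [Nat.cast_sub hle]; ring,
      show (((j - i : ℕ) : ℝ) * t - ((i + j + 2 : ℕ) : ℝ) * t) / 2 = -(((i:ℝ) + 1) * t) by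
        push_cast [Nat.cast_sub hle]; ring, Real.sin_neg] at hcc
    rw [show π / ((n:ℝ) + 1) * Real.sin t ^ 2
          * (Real.sqrt (2/π) * (Real.sin (((i:ℝ) + 1) * t) / Real.sin t))
          * (Real.sqrt (2/π) * (Real.sin (((j:ℝ) + 1) * t) / Real.sin t))
        = π / ((n:ℝ) + 1) * (Real.sqrt (2/π) * Real.sqrt (2/π))
          * ((Real.sin t / Real.sin t) * (Real.sin t / Real.sin t))
          * (Real.sin (((i:ℝ) + 1) * t) * Real.sin (((j:ℝ) + 1) * t)) from by ring,
      hps, div_self hs, hcc]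
    field_simp
  rw [Finset.sum_congr rfl trans, ← Finset.mul_sum, Finset.sum_sub_distrib]
  by_cases heq : i = j
  · subst heq
    rw [if_pos rfl, Nat.sub_self, sum_cos_zero, sum2 n (i + i + 2) (by omega) (by omega),
      show ((i + i + 2 : ℕ) : ℝ) * π = ((i + 1 : ℕ) : ℝ) * (2 * π) from by push_cast; ring,
      Real.cos_nat_mul_two_pi]
    field_simp
    ring
  · rw [if_neg heq, sum2 n (j - i) (by omega) (by omega),
      sum2 n (i + j + 2) (by omega) (by omega),
      show ((i + j + 2 : ℕ) : ℝ) * π = ((j - i : ℕ) : ℝ) * π + (((i:ℤ) + 1 : ℤ) : ℝ) * (2 * π) from by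
        push_cast [Nat.cast_sub hle]; ring,
      Real.cos_add_int_mul_two_pi]
    ring

end Ortho2
section Ortho34

lemma ortho3 (n i j : ℕ) (hij : i + j < 2 * n) (hle : i ≤ j) :
    ∑ k ∈ Finset.Icc 1 n, lam ChebKind.three n k * pEval ChebKind.three i (xNode ChebKind.three n k)
      * pEval ChebKind.three j (xNode ChebKind.three n k) = if i = j then 1 else 0 := by
  have hπ := Real.pi_pos
  have hn : 0 < n := by omega
  have hn' : (0:ℝ) < n := by exact_mod_cast hn
  have hsp : Real.sqrt π * Real.sqrt π = π := Real.mul_self_sqrt hπ.le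
  have trans : ∀ k ∈ Finset.Icc 1 n,
      lam ChebKind.three n k * pEval ChebKind.three i (xNode ChebKind.three n k)
        * pEval ChebKind.three j (xNode ChebKind.three n k)
      = (2 / (2 * (n:ℝ) + 1)) * (Real.cos ((i + j + 1 : ℕ) * tNode ChebKind.three n k)
          + Real.cos ((j - i : ℕ) * tNode ChebKind.three n k)) := by
    intro k hk
    obtain ⟨ht0, htπ⟩ := tnode_mem ChebKind.three n k hk
    set t := tNode ChebKind.three n k with hts
    have hc : Real.cos (t / 2) ≠ 0 := by
      apply ne_of_gt (Real.cos_pos_of_mem_Ioo ⟨by linarith [Real.pi_pos], by linarith⟩)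
    have hs2 : Real.sin (t / 2) ≠ 0 := by
      apply ne_of_gt (Real.sin_pos_of_pos_of_lt_pi (by linarith) (by linarith))
    simp only [lam, xNode, ← hts, pe3 i t hc hs2, pe3 j t hc hs2]
    have hca := Real.cos_add_cos ((i + j + 1 : ℕ) * t) ((j - i : ℕ) * t)
    rw [show (((i + j + 1 : ℕ) : ℝ) * t + ((j - i : ℕ) : ℝ) * t) / 2
          = (2 * (j:ℝ) + 1) * t / 2 by push_cast [Nat.cast_sub hle]; ring,
      show (((i + j + 1 : ℕ) : ℝ) * t - ((j - i : ℕ) : ℝ) * t) / 2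
          = (2 * (i:ℝ) + 1) * t / 2 by push_cast [Nat.cast_sub hle]; ring] at hca
    rw [show 4 * π / (2 * (n:ℝ) + 1) * Real.cos (t / 2) ^ 2
          * (1 / Real.sqrt π * (Real.cos ((2 * (i:ℝ) + 1) * t / 2) / Real.cos (t / 2)))
          * (1 / Real.sqrt π * (Real.cos ((2 * (j:ℝ) + 1) * t / 2) / Real.cos (t / 2)))
        = 4 * π / (2 * (n:ℝ) + 1) * (1 / (Real.sqrt π * Real.sqrt π))
          * ((Real.cos (t / 2) / Real.cos (t / 2)) * (Real.cos (t / 2) / Real.cos (t / 2)))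
          * (Real.cos ((2 * (j:ℝ) + 1) * t / 2) * Real.cos ((2 * (i:ℝ) + 1) * t / 2))
          from by ring, hsp, div_self hc, hca]
    field_simp
    ring
  rw [Finset.sum_congr rfl trans, ← Finset.mul_sum, Finset.sum_add_distrib]
  by_cases heq : i = j
  · subst heq
    rw [if_pos rfl, Nat.sub_self, sum_cos_zero, sum3 n (i + i + 1) (by omega) (by omega),
      show ((i + i + 1 : ℕ) : ℝ) * π = π + (((i:ℤ) : ℤ) : ℝ) * (2 * π) from by push_cast; ring,
      Real.cos_add_int_mul_two_pi, Real.cos_pi]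
    field_simp
    ring
  · rw [if_neg heq, sum3 n (i + j + 1) (by omega) (by omega),
      sum3 n (j - i) (by omega) (by omega),
      show ((i + j + 1 : ℕ) : ℝ) * π = (((j - i : ℕ) : ℝ) * π + π) + (((i:ℤ) : ℤ) : ℝ) * (2 * π)
        from by push_cast [Nat.cast_sub hle]; ring,
      Real.cos_add_int_mul_two_pi, Real.cos_add_pi]
    ring

lemma ortho4 (n i j : ℕ) (hij : i + j < 2 * n) (hle : i ≤ j) :
    ∑ k ∈ Finset.Icc 1 n, lam ChebKind.four n k * pEval ChebKind.four i (xNode ChebKind.four n k)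
      * pEval ChebKind.four j (xNode ChebKind.four n k) = if i = j then 1 else 0 := by
  have hπ := Real.pi_pos
  have hn : 0 < n := by omega
  have hn' : (0:ℝ) < n := by exact_mod_cast hn
  have hsp : Real.sqrt π * Real.sqrt π = π := Real.mul_self_sqrt hπ.le
  have trans : ∀ k ∈ Finset.Icc 1 n,
      lam ChebKind.four n k * pEval ChebKind.four i (xNode ChebKind.four n k)
        * pEval ChebKind.four j (xNode ChebKind.four n k)
      = (2 / (2 * (n:ℝ) + 1)) * (Real.cos ((j - i : ℕ) * tNode ChebKind.four n k)
          - Real.cos ((i + j + 1 : ℕ) * tNode ChebKind.four n k)) := by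
    intro k hk
    obtain ⟨ht0, htπ⟩ := tnode_mem ChebKind.four n k hk
    set t := tNode ChebKind.four n k with hts
    have hc : Real.cos (t / 2) ≠ 0 := by
      apply ne_of_gt (Real.cos_pos_of_mem_Ioo ⟨by linarith [Real.pi_pos], by linarith⟩)
    have hs2 : Real.sin (t / 2) ≠ 0 := by
      apply ne_of_gt (Real.sin_pos_of_pos_of_lt_pi (by linarith) (by linarith))
    simp only [lam, xNode, ← hts, pe4 i t hc hs2, pe4 j t hc hs2]
    have hcc := Real.cos_sub_cos ((j - i : ℕ) * t) ((i + j + 1 : ℕ) * t)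
    rw [show (((j - i : ℕ) : ℝ) * t + ((i + j + 1 : ℕ) : ℝ) * t) / 2
          = (2 * (j:ℝ) + 1) * t / 2 by push_cast [Nat.cast_sub hle]; ring,
      show (((j - i : ℕ) : ℝ) * t - ((i + j + 1 : ℕ) : ℝ) * t) / 2
          = -((2 * (i:ℝ) + 1) * t / 2) by push_cast [Nat.cast_sub hle]; ring,
      Real.sin_neg] at hcc
    rw [show 4 * π / (2 * (n:ℝ) + 1) * Real.sin (t / 2) ^ 2
          * (1 / Real.sqrt π * (Real.sin ((2 * (i:ℝ) + 1) * t / 2) / Real.sin (t / 2)))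
          * (1 / Real.sqrt π * (Real.sin ((2 * (j:ℝ) + 1) * t / 2) / Real.sin (t / 2)))
        = 4 * π / (2 * (n:ℝ) + 1) * (1 / (Real.sqrt π * Real.sqrt π))
          * ((Real.sin (t / 2) / Real.sin (t / 2)) * (Real.sin (t / 2) / Real.sin (t / 2)))
          * (Real.sin ((2 * (j:ℝ) + 1) * t / 2) * Real.sin ((2 * (i:ℝ) + 1) * t / 2))
          from by ring, hsp, div_self hs2, hcc]
    field_simp
    ring
  rw [Finset.sum_congr rfl trans, ← Finset.mul_sum, Finset.sum_sub_distrib]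
  by_cases heq : i = j
  · subst heq
    rw [if_pos rfl, Nat.sub_self, sum_cos_zero, sum4 n (i + i + 1) (by omega) (by omega)]
    field_simp
    ring
  · rw [if_neg heq, sum4 n (i + j + 1) (by omega) (by omega),
      sum4 n (j - i) (by omega) (by omega)]
    ring

end Ortho34
section OrthoAll

lemma ortho (w : ChebKind) (n i j : ℕ) (hij : i + j < 2 * n) :
    ∑ k ∈ Finset.Icc 1 n, lam w n k * pEval w i (xNode w n k)
      * pEval w j (xNode w n k) = if i = j then 1 else 0 := by
  have key : ∀ a b : ℕ, a + b < 2 * n → a ≤ b →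
      ∑ k ∈ Finset.Icc 1 n, lam w n k * pEval w a (xNode w n k)
        * pEval w b (xNode w n k) = if a = b then 1 else 0 := by
    intro a b h1 h2
    cases w with
    | one => exact ortho1 n a b (by omega) h1 h2
    | two => exact ortho2 n a b h1 h2
    | three => exact ortho3 n a b h1 h2
    | four => exact ortho4 n a b h1 h2
  rcases le_total i j with hle | hle
  · exact key i j hij hle
  · have h := key j i (by omega) hle
    rw [show (if i = j then (1:ℝ) else 0) = (if j = i then (1:ℝ) else 0) from by
      by_cases hh : i = j <;> simp [hh, Ne.symm, eq_comm]]
    rw [← h]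
    apply Finset.sum_congr rfl
    intro k _
    ring

end OrthoAll
section Deg
open Polynomial.Chebyshev

lemma U_bound : ∀ j : ℕ, (U ℝ (j:ℤ)).natDegree ≤ j ∧ (U ℝ (j:ℤ)).coeff j = 2 ^ j := by
  have main : ∀ j : ℕ,
      ((U ℝ (j:ℤ)).natDegree ≤ j ∧ (U ℝ (j:ℤ)).coeff j = 2 ^ j) ∧
      ((U ℝ ((j+1:ℕ):ℤ)).natDegree ≤ j + 1 ∧ (U ℝ ((j+1:ℕ):ℤ)).coeff (j+1) = 2 ^ (j+1)) := by
    intro j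
    induction j with
    | zero =>
      refine ⟨⟨?_, ?_⟩, ?_, ?_⟩ <;>
        simp [U_zero, show ((1:ℕ):ℤ) = (1:ℤ) from rfl, U_one, Polynomial.coeff_ofNat_mul]
    | succ j ih =>
      obtain ⟨⟨hd0, hc0⟩, hd1, hc1⟩ := ih
      refine ⟨⟨hd1, hc1⟩, ?_, ?_⟩
      · rw [show ((j+2:ℕ):ℤ) = ((j:ℤ) + 2) from by push_cast; ring, U_add_two]
        apply le_trans (Polynomial.natDegree_sub_le _ _)
        simp only [sup_le_iff]
        constructor
        · apply le_trans (Polynomial.natDegree_mul_le)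
          have h1 : (2 * Polynomial.X : Polynomial ℝ).natDegree ≤ 1 := by
            apply le_trans (Polynomial.natDegree_mul_le)
            simp [Polynomial.natDegree_X]
          have h2 : (U ℝ ((j:ℤ) + 1)).natDegree ≤ j + 1 := by
            rw [show ((j:ℤ) + 1) = ((j+1:ℕ):ℤ) from by push_cast; ring]; exact hd1
          omega
        · omega
      · rw [show ((j+2:ℕ):ℤ) = ((j:ℤ) + 2) from by push_cast; ring, U_add_two]
        rw [Polynomial.coeff_sub]
        have hz : (U ℝ (j:ℤ)).coeff (j + 2) = 0 :=
          Polynomial.coeff_eq_zero_of_natDegree_lt (by omega)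
        have hx : (2 * Polynomial.X * U ℝ ((j:ℤ)+1)).coeff (j + 2)
            = 2 * (U ℝ ((j:ℤ)+1)).coeff (j+1) := by
          rw [show (2 * Polynomial.X * U ℝ ((j:ℤ)+1)) = Polynomial.X * (2 * U ℝ ((j:ℤ)+1))
            from by ring, show j + 2 = (j + 1) + 1 from rfl, Polynomial.coeff_X_mul,
            Polynomial.coeff_ofNat_mul]
        rw [hz, hx, show ((j:ℤ) + 1) = ((j+1:ℕ):ℤ) from by push_cast; ring, hc1]
        ring
  exact fun j => (main j).1

lemma T_bound : ∀ j : ℕ, (Chebyshev.T ℝ (j:ℤ)).natDegree ≤ j ∧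
    (Chebyshev.T ℝ (j:ℤ)).coeff j ≠ 0 := by
  have main : ∀ j : ℕ,
      ((T ℝ (j:ℤ)).natDegree ≤ j ∧ (T ℝ (j:ℤ)).coeff j
        = if j = 0 then 1 else 2 ^ (j-1)) ∧
      ((T ℝ ((j+1:ℕ):ℤ)).natDegree ≤ j + 1 ∧ (T ℝ ((j+1:ℕ):ℤ)).coeff (j+1) = 2 ^ j) := by
    intro j
    induction j with
    | zero =>
      refine ⟨⟨?_, ?_⟩, ?_, ?_⟩ <;>
        simp [T_zero, show ((1:ℕ):ℤ) = (1:ℤ) from rfl, T_one, Polynomial.natDegree_X]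
    | succ j ih =>
      obtain ⟨⟨hd0, hc0⟩, hd1, hc1⟩ := ih
      refine ⟨⟨hd1, by simpa using hc1⟩, ?_, ?_⟩
      · rw [show ((j+2:ℕ):ℤ) = ((j:ℤ) + 2) from by push_cast; ring, T_add_two]
        apply le_trans (Polynomial.natDegree_sub_le _ _)
        simp only [sup_le_iff]
        constructor
        · apply le_trans (Polynomial.natDegree_mul_le)
          have h1 : (2 * Polynomial.X : Polynomial ℝ).natDegree ≤ 1 := by
            apply le_trans (Polynomial.natDegree_mul_le)
            simp [Polynomial.natDegree_X]
          have h2 : (T ℝ ((j:ℤ) + 1)).natDegree ≤ j + 1 := by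
            rw [show ((j:ℤ) + 1) = ((j+1:ℕ):ℤ) from by push_cast; ring]; exact hd1
          omega
        · omega
      · rw [show ((j+2:ℕ):ℤ) = ((j:ℤ) + 2) from by push_cast; ring, T_add_two]
        rw [Polynomial.coeff_sub]
        have hz : (T ℝ (j:ℤ)).coeff (j + 2) = 0 :=
          Polynomial.coeff_eq_zero_of_natDegree_lt (by omega)
        have hx : (2 * Polynomial.X * T ℝ ((j:ℤ)+1)).coeff (j + 2)
            = 2 * (T ℝ ((j:ℤ)+1)).coeff (j+1) := by
          rw [show (2 * Polynomial.X * T ℝ ((j:ℤ)+1)) = Polynomial.X * (2 * T ℝ ((j:ℤ)+1))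
            from by ring, show j + 2 = (j + 1) + 1 from rfl, Polynomial.coeff_X_mul,
            Polynomial.coeff_ofNat_mul]
        rw [hz, hx, show ((j:ℤ) + 1) = ((j+1:ℕ):ℤ) from by push_cast; ring, hc1]
        ring
  intro j
  refine ⟨(main j).1.1, ?_⟩
  rw [(main j).1.2]
  split <;> positivity

lemma pPoly_bound (w : ChebKind) (j : ℕ) :
    (pPoly w j).natDegree ≤ j ∧ (pPoly w j).coeff j ≠ 0 := by
  have hπ := Real.pi_pos
  have hsp : Real.sqrt π ≠ 0 := by positivity
  have hsp2 : Real.sqrt (2/π) ≠ 0 := by positivity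
  cases w with
  | one =>
    cases j with
    | zero =>
      constructor
      · simp [pPoly]
      · simp [pPoly, Polynomial.coeff_C]
        positivity
    | succ j' =>
      obtain ⟨hd, hc⟩ := T_bound (j' + 1)
      rw [show (((j'+1:ℕ)):ℤ) = ((j':ℤ) + 1) from by push_cast; ring] at hd hc
      constructor
      · simp only [pPoly]
        apply le_trans (Polynomial.natDegree_mul_le)
        simp [Polynomial.natDegree_C]
        omega
      · simp only [pPoly, Polynomial.coeff_C_mul]
        exact mul_ne_zero hsp2 hc
  | two =>
    obtain ⟨hd, hc⟩ := U_bound j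
    constructor
    · simp only [pPoly]
      apply le_trans (Polynomial.natDegree_mul_le)
      simp [Polynomial.natDegree_C]
    · simp only [pPoly, Polynomial.coeff_C_mul]
      rw [hc]
      positivity
  | three =>
    constructor
    · simp only [pPoly]
      apply le_trans (Polynomial.natDegree_mul_le)
      apply le_trans (Nat.add_le_add_left (Polynomial.natDegree_sub_le _ _) _)
      simp only [Polynomial.natDegree_C, zero_add, sup_le_iff]
      cases j with
      | zero => simp [Chebyshev.U_neg_one, (U_bound 0).1]
      | succ j' =>
        constructor
        · exact (U_bound (j'+1)).1
        · rw [show (((j'+1:ℕ)):ℤ) - 1 = ((j':ℕ):ℤ) from by push_cast; ring]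
          exact le_trans (U_bound j').1 (by omega)
    · simp only [pPoly, Polynomial.coeff_C_mul, Polynomial.coeff_sub]
      apply mul_ne_zero (by positivity)
      cases j with
      | zero => simp [Chebyshev.U_neg_one, (U_bound 0).2]
      | succ j' =>
        rw [show (((j'+1:ℕ)):ℤ) - 1 = ((j':ℕ):ℤ) from by push_cast; ring,
          (U_bound (j'+1)).2,
          Polynomial.coeff_eq_zero_of_natDegree_lt (lt_of_le_of_lt (U_bound j').1 (by omega))]
        norm_num
  | four =>
    constructor
    · simp only [pPoly]
      apply le_trans (Polynomial.natDegree_mul_le)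
      apply le_trans (Nat.add_le_add_left (Polynomial.natDegree_add_le _ _) _)
      simp only [Polynomial.natDegree_C, zero_add, sup_le_iff]
      cases j with
      | zero => simp [Chebyshev.U_neg_one, (U_bound 0).1]
      | succ j' =>
        constructor
        · exact (U_bound (j'+1)).1
        · rw [show (((j'+1:ℕ)):ℤ) - 1 = ((j':ℕ):ℤ) from by push_cast; ring]
          exact le_trans (U_bound j').1 (by omega)
    · simp only [pPoly, Polynomial.coeff_C_mul, Polynomial.coeff_add]
      apply mul_ne_zero (by positivity)
      cases j with
      | zero => simp [Chebyshev.U_neg_one, (U_bound 0).2]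
      | succ j' =>
        rw [show (((j'+1:ℕ)):ℤ) - 1 = ((j':ℕ):ℤ) from by push_cast; ring,
          (U_bound (j'+1)).2,
          Polynomial.coeff_eq_zero_of_natDegree_lt (lt_of_le_of_lt (U_bound j').1 (by omega))]
        norm_num

end Deg
section Rep

lemma exists_rep (w : ChebKind) : ∀ d : ℕ, ∀ P : Polynomial ℝ, P.natDegree ≤ d →
    ∃ c : ℕ → ℝ, P = ∑ i ∈ Finset.range (d+1), Polynomial.C (c i) * pPoly w i := by
  intro d
  induction d with
  | zero =>
    intro P hP
    obtain ⟨hd0, hc0⟩ := pPoly_bound w 0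
    set b := (pPoly w 0).coeff 0 with hb
    have hp0 : pPoly w 0 = Polynomial.C b := Polynomial.eq_C_of_natDegree_le_zero hd0
    refine ⟨fun _ => P.coeff 0 / b, ?_⟩
    rw [Finset.sum_range_one, hp0, ← Polynomial.C_mul,
      show (fun _ : ℕ => P.coeff 0 / b) 0 = P.coeff 0 / b from rfl,
      div_mul_cancel₀ _ hc0]
    exact Polynomial.eq_C_of_natDegree_le_zero hP
  | succ d ih =>
    intro P hP
    obtain ⟨hd, hc⟩ := pPoly_bound w (d+1)
    set a := P.coeff (d+1) / (pPoly w (d+1)).coeff (d+1) with ha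
    set Q := P - Polynomial.C a * pPoly w (d+1) with hQ
    have hQd : Q.natDegree ≤ d := by
      rw [Polynomial.natDegree_le_iff_coeff_eq_zero]
      intro N hN
      rcases Nat.lt_or_ge (d+1) N with h | h
      · have h1 : P.coeff N = 0 := Polynomial.coeff_eq_zero_of_natDegree_lt (by omega)
        have h2 : (pPoly w (d+1)).coeff N = 0 :=
          Polynomial.coeff_eq_zero_of_natDegree_lt (by omega)
        rw [hQ, Polynomial.coeff_sub, Polynomial.coeff_C_mul, h1, h2]
        ring
      · have hN1 : N = d+1 := by omega
        subst hN1
        rw [hQ, Polynomial.coeff_sub, Polynomial.coeff_C_mul, ha,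
          div_mul_cancel₀ _ hc]
        ring
    obtain ⟨c, hcQ⟩ := ih Q hQd
    refine ⟨fun i => if i = d+1 then a else c i, ?_⟩
    rw [Finset.sum_range_succ]
    have hrest : ∑ i ∈ Finset.range (d+1),
          Polynomial.C (if i = d+1 then a else c i) * pPoly w i
        = ∑ i ∈ Finset.range (d+1), Polynomial.C (c i) * pPoly w i := by
      apply Finset.sum_congr rfl
      intro i hi
      simp only [Finset.mem_range] at hi
      rw [if_neg (by omega)]
    rw [hrest,
      show ((fun i => if i = d+1 then a else c i) (d+1)) = a from by simp,
      ← hcQ, hQ]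
    ring

end Rep
/-- the VP operator reproduces all polynomials of degree at most `n−m`. -/
theorem stmt14 (w : ChebKind) (n m : ℕ) (hm : 0 < m) (hmn : m < n)
    (P : Polynomial ℝ) (hP : P.natDegree ≤ n - m) :
    ∀ x ∈ Set.Icc (-1 : ℝ) 1, VP w n m (fun y => P.eval y) x = P.eval x := by
  intro x _
  obtain ⟨c, hc⟩ := exists_rep w (n - m) P hP
  have hPe : ∀ y : ℝ, P.eval y = ∑ i ∈ Finset.range (n - m + 1), c i * pEval w i y := by
    intro y
    conv_lhs => rw [hc]
    rw [Polynomial.eval_finset_sum]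
    apply Finset.sum_congr rfl
    intro i _
    simp [pEval]
  have inner : ∀ j ∈ Finset.range (n + m),
      ∑ k ∈ Finset.Icc 1 n, lam w n k * P.eval (xNode w n k) * pEval w j (xNode w n k)
      = if j ∈ Finset.range (n - m + 1) then c j else 0 := by
    intro j hj
    simp only [Finset.mem_range] at hj
    have h1 : ∀ k ∈ Finset.Icc 1 n,
        lam w n k * P.eval (xNode w n k) * pEval w j (xNode w n k)
        = ∑ i ∈ Finset.range (n - m + 1),
            c i * (lam w n k * pEval w i (xNode w n k) * pEval w j (xNode w n k)) := by
      intro k _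
      rw [hPe (xNode w n k), Finset.mul_sum, Finset.sum_mul]
      apply Finset.sum_congr rfl
      intro i _
      ring
    rw [Finset.sum_congr rfl h1, Finset.sum_comm]
    have h2 : ∀ i ∈ Finset.range (n - m + 1),
        ∑ k ∈ Finset.Icc 1 n,
            c i * (lam w n k * pEval w i (xNode w n k) * pEval w j (xNode w n k))
        = if i = j then c i else 0 := by
      intro i hi
      simp only [Finset.mem_range] at hi
      rw [← Finset.mul_sum, ortho w n i j (by omega)]
      by_cases hij : i = j <;> simp [hij]
    rw [Finset.sum_congr rfl h2, Finset.sum_ite_eq' (Finset.range (n - m + 1)) j c]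
  have expand : VP w n m (fun y => P.eval y) x
      = ∑ j ∈ Finset.range (n + m), (mufilt n m j * pEval w j x)
          * ∑ k ∈ Finset.Icc 1 n,
              lam w n k * P.eval (xNode w n k) * pEval w j (xNode w n k) := by
    rw [VP]
    have h1 : ∀ k ∈ Finset.Icc 1 n,
        (fun y => P.eval y) (xNode w n k) * Phi w n m k x
        = ∑ j ∈ Finset.range (n + m), (mufilt n m j * pEval w j x)
            * (lam w n k * P.eval (xNode w n k) * pEval w j (xNode w n k)) := by
      intro k _
      rw [Phi, Finset.mul_sum, Finset.mul_sum]
      apply Finset.sum_congr rfl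
      intro j _
      ring
    rw [Finset.sum_congr rfl h1, Finset.sum_comm]
    apply Finset.sum_congr rfl
    intro j _
    rw [Finset.mul_sum]
  rw [expand, Finset.sum_congr rfl (fun j hj => by rw [inner j hj])]
  have hsub : Finset.range (n - m + 1) ⊆ Finset.range (n + m) := by
    apply Finset.range_subset_range.mpr
    omega
  rw [← Finset.sum_subset hsub (fun j _ hj => by rw [if_neg hj, mul_zero])]
  rw [hPe x]
  apply Finset.sum_congr rfl
  intro j hj
  simp only [Finset.mem_range] at hj
  rw [if_pos (Finset.mem_range.mpr hj), mufilt, if_pos (by omega)]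
  ring
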